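/- With the same hypotheses as in the index-positive case, except assuming instead that H_*^{S^1}(B) is index-negative (there is N with H_i^{S^1}(B)=0 for all i>N), the mean Euler characteristic χ_m(H_*^{S^1}(B)) exists and equals -χ(H_*(B))/2. -/

import Mathlib

open Filter Finset Topology

private lemma step_formula (f : ℕ → ℝ) (d : ℝ) (h : ∀ n, f (n+2) = f n + d) :
    ∀ n, f n = f (n % 2) + (n / 2 : ℕ) * d := by
  intro n
  induction n using Nat.strong_induction_on with
  | _ n ih =>
    match n with
    | 0 => simp
    | 1 => simp
    | (m+2) =>
      rw [h m, ih m (by omega)]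
      have h1 : (m+2) % 2 = m % 2 := by omega
      have h2 : (m+2) / 2 = m / 2 + 1 := by omega
      rw [h1, h2]
      push_cast
      ring

private lemma tendsto_aux (f : ℕ → ℝ) (d : ℝ) (K : ℕ)
    (hstep : ∀ N, K ≤ N → f (N+2) = f N + d) :
    Tendsto (fun N : ℕ => (1/(N:ℝ)) * f N) atTop (𝓝 (d/2)) := by
  set c0 : ℝ := f K - K * d / 2 with hc0
  set c1 : ℝ := f (K+1) - (K+1) * d / 2 with hc1
  set B : ℝ := max |c0| |c1| with hB
  have key : ∀ N, K ≤ N → |f N - N * d / 2| ≤ B := by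
    intro N hN
    obtain ⟨m, rfl⟩ : ∃ m, N = K + m := ⟨N - K, by omega⟩
    have hf := step_formula (fun m => f (K + m)) d
      (fun n => by simpa [Nat.add_assoc] using hstep (K + n) (by omega)) m
    rcases Nat.even_or_odd m with he | ho
    · obtain ⟨k, rfl⟩ := he
      have h1 : (k+k) % 2 = 0 := by omega
      have h2 : (k+k) / 2 = k := by omega
      rw [h1, h2] at hf
      have : f (K + (k+k)) - (K + (k+k) : ℕ) * d / 2 = c0 := by
        rw [hf, hc0]; push_cast; ring
      rw [this]; exact le_max_left _ _
    · obtain ⟨k, rfl⟩ := ho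
      have h1 : (2*k+1) % 2 = 1 := by omega
      have h2 : (2*k+1) / 2 = k := by omega
      rw [h1, h2] at hf
      have : f (K + (2*k+1)) - (K + (2*k+1) : ℕ) * d / 2 = c1 := by
        rw [hf, hc1]; push_cast; ring
      rw [this]; exact le_max_right _ _
  have h0 : Tendsto (fun N : ℕ => B / N) atTop (𝓝 0) := tendsto_const_div_atTop_nhds_zero_nat B
  have hlow : Tendsto (fun N : ℕ => d/2 - B/N) atTop (𝓝 (d/2)) := by
    simpa using tendsto_const_nhds.sub h0
  have hhigh : Tendsto (fun N : ℕ => d/2 + B/N) atTop (𝓝 (d/2)) := by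
    simpa using tendsto_const_nhds.add h0
  apply tendsto_of_tendsto_of_tendsto_of_le_of_le' hlow hhigh
  · filter_upwards [eventually_ge_atTop (max K 1)] with N hN
    have hK : K ≤ N := le_trans (le_max_left K 1) hN
    have hN1 : (1:ℕ) ≤ N := le_trans (le_max_right K 1) hN
    have hNpos : (0:ℝ) < N := by exact_mod_cast hN1
    have hk := (abs_le.mp (key N hK)).1
    have expand : d/2 - B/(N:ℝ) = ((N:ℝ)*d/2 - B)/N := by field_simp
    rw [one_div, inv_mul_eq_div, expand]
    gcongr
    linarith
  · filter_upwards [eventually_ge_atTop (max K 1)] with N hN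
    have hK : K ≤ N := le_trans (le_max_left K 1) hN
    have hN1 : (1:ℕ) ≤ N := le_trans (le_max_right K 1) hN
    have hNpos : (0:ℝ) < N := by exact_mod_cast hN1
    have hk := (abs_le.mp (key N hK)).2
    have expand : d/2 + B/(N:ℝ) = ((N:ℝ)*d/2 + B)/N := by field_simp
    rw [one_div, inv_mul_eq_div, expand]
    gcongr
    linarith

private lemma telescope (g : ℤ → ℝ) : ∀ (n : ℕ) (A : ℤ),
    ∑ i ∈ Finset.Icc A (A + (n:ℤ)), (g i - g (i-1)) = g (A + (n:ℤ)) - g (A - 1) := by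
  intro n
  induction n with
  | zero => intro A; simp
  | succ n ih =>
    intro A
    have hcast : (A + ((n:ℕ)+1:ℕ) : ℤ) = (A + (n:ℤ)) + 1 := by push_cast; ring
    rw [hcast]
    have hins : Finset.Icc A ((A + (n:ℤ)) + 1) = insert ((A + (n:ℤ)) + 1) (Finset.Icc A (A + (n:ℤ))) := by
      ext x; simp only [Finset.mem_Icc, Finset.mem_insert]; omega
    rw [hins, Finset.sum_insert (by simp only [Finset.mem_Icc]; omega), ih A]
    ring_nf

theorem stmt1
    (HB HS : ℤ → Type) [∀ i, AddCommGroup (HB i)] [∀ i, Module ℚ (HB i)]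
    [∀ i, AddCommGroup (HS i)] [∀ i, Module ℚ (HS i)]
    [∀ i, FiniteDimensional ℚ (HB i)] [∀ i, FiniteDimensional ℚ (HS i)]
    (α : ∀ i : ℤ, HB i →ₗ[ℚ] HS i)
    (β : ∀ i : ℤ, HS i →ₗ[ℚ] HS (i - 2))
    (γ : ∀ i : ℤ, HS (i - 2) →ₗ[ℚ] HB (i - 1))
    (hαβ : ∀ i, Function.Exact (α i) (β i))
    (hβγ : ∀ i, Function.Exact (β i) (γ i))
    (hγα : ∀ i, Function.Exact (γ i) (α (i - 1)))
    (N₀ : ℕ) (hvanish : ∀ i : ℤ, (N₀ : ℤ) < |i| → Subsingleton (HB i))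
    (C : ℕ) (hbound : ∀ i, Module.finrank ℚ (HS i) < C)
    (N₁ : ℤ) (hidxneg : ∀ i > N₁, Subsingleton (HS i)) :
    Tendsto
      (fun N : ℕ =>
        (1 / (N : ℝ)) *
          ∑ i ∈ Finset.Icc (-(N : ℤ)) (N : ℤ), (-1 : ℝ) ^ i * (Module.finrank ℚ (HS i) : ℝ))
      atTop
      (𝓝 (-(∑ i ∈ Finset.Icc (-(N₀ : ℤ)) (N₀ : ℤ),
            (-1 : ℝ) ^ i * (Module.finrank ℚ (HB i) : ℝ)) / 2)) := by
  classical
  set s : ℤ → ℕ := fun i => Module.finrank ℚ (HS i) with hs_def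
  set b : ℤ → ℕ := fun i => Module.finrank ℚ (HB i) with hb_def
  set ra : ℤ → ℕ := fun i => Module.finrank ℚ (LinearMap.range (α i)) with hra_def
  set rb : ℤ → ℕ := fun i => Module.finrank ℚ (LinearMap.range (β i)) with hrb_def
  set rg : ℤ → ℕ := fun i => Module.finrank ℚ (LinearMap.range (γ i)) with hrg_def
  -- rank-nullity facts
  have F1 : ∀ i, s i = ra i + rb i := by
    intro i
    have h1 := LinearMap.finrank_range_add_finrank_ker (β i)
    rw [LinearMap.exact_iff.mp (hαβ i)] at h1
    simp only [hs_def, hra_def, hrb_def]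
    omega
  have F2 : ∀ i, s (i-2) = rb i + rg i := by
    intro i
    have h1 := LinearMap.finrank_range_add_finrank_ker (γ i)
    rw [LinearMap.exact_iff.mp (hβγ i)] at h1
    simp only [hs_def, hrb_def, hrg_def]
    omega
  have F3 : ∀ i, b (i-1) = rg i + ra (i-1) := by
    intro i
    have h1 := LinearMap.finrank_range_add_finrank_ker (α (i-1))
    rw [LinearMap.exact_iff.mp (hγα i)] at h1
    simp only [hb_def, hrg_def, hra_def]
    omega
  have habs : ∀ j : ℤ, (j < -(N₀:ℤ) ∨ (N₀:ℤ) < j) → (N₀:ℤ) < |j| := by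
    intro j h
    rcases le_total 0 j with h' | h'
    · rw [abs_of_nonneg h']; omega
    · rw [abs_of_nonpos h']; omega
  have hbz : ∀ j : ℤ, (j < -(N₀:ℤ) ∨ (N₀:ℤ) < j) → b j = 0 := by
    intro j h
    have := hvanish j (habs j h)
    simp only [hb_def]
    exact Module.finrank_zero_of_subsingleton
  have hsz : ∀ j : ℤ, N₁ < j → s j = 0 := by
    intro j h
    have := hidxneg j h
    simp only [hs_def]
    exact Module.finrank_zero_of_subsingleton
  have ra_le_b : ∀ i, ra i ≤ b i := fun i => LinearMap.finrank_range_le (α i)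
  have ra_le_s : ∀ i, ra i ≤ s i := fun i => Submodule.finrank_le _
  have rg_le_b : ∀ i, rg i ≤ b (i-1) := fun i => Submodule.finrank_le _
  -- stability below -N₀
  have hstable : ∀ i : ℤ, i ≤ -(N₀:ℤ) - 1 → s (i-2) = s i := by
    intro i hi
    have h1 : b i = 0 := hbz i (by omega)
    have h2 : b (i-1) = 0 := hbz (i-1) (by omega)
    have h3 : ra i = 0 := by have := ra_le_b i; omega
    have h4 : rg i = 0 := by have := rg_le_b i; omega
    have := F1 i; have := F2 i
    omega
  -- zpow helpers
  have hne : (-1:ℝ) ≠ 0 := by norm_num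
  have hzn : ∀ n : ℕ, (-1:ℝ)^(-(n:ℤ)) = (-1:ℝ)^n := by
    intro n
    rw [zpow_neg, zpow_natCast, ← inv_pow]
    norm_num
  have hsub1 : ∀ j : ℤ, (-1:ℝ)^(j-1) = -((-1:ℝ)^j) := by
    intro j
    rw [zpow_sub₀ hne, zpow_one]
    ring
  -- the pair function
  set p : ℕ → ℝ := fun M => (-1:ℝ)^M * (((s (-(M:ℤ)) : ℝ)) - ((s (-(M:ℤ)+1) : ℝ))) with hp_def
  have hpstep : ∀ M, N₀ + 2 ≤ M → p (M+1) = p M := by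
    intro M hM
    have hst : s (-(M:ℤ)+1-2) = s (-(M:ℤ)+1) := hstable (-(M:ℤ)+1) (by omega)
    have hst' : s (-(M:ℤ)-1) = s (-(M:ℤ)+1) := by
      rw [show -(M:ℤ)-1 = -(M:ℤ)+1-2 by ring]; exact hst
    simp only [hp_def]
    push_cast
    have h1 : s (-((M:ℤ)+1)) = s (-(M:ℤ)+1) := by
      rw [show -((M:ℤ)+1) = -(M:ℤ)+1-2 by ring]; exact hst
    have h2 : s (-((M:ℤ)+1)+1) = s (-(M:ℤ)) := by
      rw [show -((M:ℤ)+1)+1 = -(M:ℤ) by ring]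
    rw [h1, h2, pow_succ]
    ring
  have hpconst : ∀ M, N₀ + 2 ≤ M → p M = p (N₀+2) := by
    intro M hM
    induction M, hM using Nat.le_induction with
    | base => rfl
    | succ M hM ih => rw [hpstep M hM, ih]
  set f : ℕ → ℝ := fun N => ∑ i ∈ Finset.Icc (-(N:ℤ)) (N:ℤ), (-1:ℝ)^i * (s i : ℝ) with hf_def
  set K : ℕ := N₀ + 2 + N₁.toNat with hK_def
  have hNtoNat : N₁ ≤ (N₁.toNat : ℤ) := Int.self_le_toNat N₁
  have hstep : ∀ N, K ≤ N → f (N+2) = f N + p (N₀+2) := by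
    intro N hN
    have hdecomp : Finset.Icc (-((N:ℕ)+2:ℕ):ℤ) (((N:ℕ)+2:ℕ):ℤ) =
        insert (-(N:ℤ)-2) (insert (-(N:ℤ)-1) (insert ((N:ℤ)+2) (insert ((N:ℤ)+1)
          (Finset.Icc (-(N:ℤ)) (N:ℤ))))) := by
      ext x
      simp only [Finset.mem_Icc, Finset.mem_insert]
      push_cast
      omega
    simp only [hf_def]
    rw [hdecomp]
    rw [Finset.sum_insert (by simp only [Finset.mem_insert, Finset.mem_Icc]; push_cast; omega),
        Finset.sum_insert (by simp only [Finset.mem_insert, Finset.mem_Icc]; push_cast; omega),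
        Finset.sum_insert (by simp only [Finset.mem_insert, Finset.mem_Icc]; push_cast; omega),
        Finset.sum_insert (by simp only [Finset.mem_Icc]; push_cast; omega)]
    have hz1 : s ((N:ℤ)+1) = 0 := hsz _ (by omega)
    have hz2 : s ((N:ℤ)+2) = 0 := hsz _ (by omega)
    have hpc : p (N+2) = p (N₀+2) := hpconst (N+2) (by omega)
    rw [← hpc]
    have hexp : p (N+2) = (-1:ℝ)^N * ((s (-(N:ℤ)-2) : ℝ) - (s (-(N:ℤ)-1) : ℝ)) := by
      simp only [hp_def]
      push_cast
      rw [show -((N:ℤ)+2) = -(N:ℤ)-2 by ring, show -(N:ℤ)-2+1 = -(N:ℤ)-1 by ring, pow_add]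
      norm_num
    rw [hexp, hz1, hz2]
    have e1 : (-1:ℝ)^(-(N:ℤ)-2) = (-1:ℝ)^N := by
      rw [show -(N:ℤ)-2 = -(((N+2:ℕ)):ℤ) by push_cast; ring, hzn, pow_add]
      norm_num
    have e2 : (-1:ℝ)^(-(N:ℤ)-1) = -((-1:ℝ)^N) := by
      rw [show -(N:ℤ)-1 = -(((N+1:ℕ)):ℤ) by push_cast; ring, hzn, pow_succ]
      ring
    rw [e1, e2]
    push_cast
    ring
  -- telescoping to compute the limit value
  set A : ℤ := -(N₀:ℤ) with hA_def
  set n : ℕ := 2*N₀ + N₁.toNat + 2 with hn_def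
  set G : ℤ → ℝ := fun i => (-1:ℝ)^i * ((s i:ℝ) - (s (i-1):ℝ)) - (-1:ℝ)^i * (ra i : ℝ) with hG_def
  have e : ∀ i : ℤ, G i - G (i-1) = (-1:ℝ)^(i-1) * (b (i-1):ℝ) := by
    intro i
    have r1 : (s i : ℝ) = (ra i:ℝ) + (rb i:ℝ) := by exact_mod_cast congrArg (Nat.cast : ℕ → ℝ) (F1 i)
    have r2 : (s (i-2) : ℝ) = (rb i:ℝ) + (rg i:ℝ) := by exact_mod_cast congrArg (Nat.cast : ℕ → ℝ) (F2 i)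
    have r3 : (b (i-1) : ℝ) = (rg i:ℝ) + (ra (i-1):ℝ) := by exact_mod_cast congrArg (Nat.cast : ℕ → ℝ) (F3 i)
    simp only [hG_def]
    rw [show i-1-1 = i-2 by ring, hsub1 i, r1, r2, r3]
    ring
  have tel := telescope G n A
  have esum : ∑ i ∈ Finset.Icc A (A + (n:ℤ)), (G i - G (i-1))
      = ∑ i ∈ Finset.Icc A (A + (n:ℤ)), (-1:ℝ)^(i-1) * (b (i-1):ℝ) :=
    Finset.sum_congr rfl (fun i _ => e i)
  have reix : ∑ i ∈ Finset.Icc A (A + (n:ℤ)), (-1:ℝ)^(i-1) * (b (i-1):ℝ)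
      = ∑ j ∈ Finset.Icc (A-1) (A+(n:ℤ)-1), (-1:ℝ)^j * (b j:ℝ) := by
    refine Finset.sum_nbij' (fun i => i - 1) (fun j => j + 1) ?_ ?_ ?_ ?_ ?_ <;>
      intro a ha <;> simp only [Finset.mem_Icc] at * <;> try omega
  have hrestrict : ∑ j ∈ Finset.Icc (A-1) (A+(n:ℤ)-1), (-1:ℝ)^j * (b j:ℝ)
      = ∑ j ∈ Finset.Icc (-(N₀:ℤ)) (N₀:ℤ), (-1:ℝ)^j * (b j:ℝ) := by
    refine (Finset.sum_subset (Finset.Icc_subset_Icc (by omega) (by omega)) ?_).symm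
    intro j hj hnj
    simp only [Finset.mem_Icc] at hj hnj
    have : b j = 0 := hbz j (by omega)
    rw [this]
    simp
  have hGB : G (A + (n:ℤ)) = 0 := by
    have hz1 : s (A + (n:ℤ)) = 0 := hsz _ (by omega)
    have hz2 : s (A + (n:ℤ) - 1) = 0 := hsz _ (by omega)
    have hz3 : ra (A + (n:ℤ)) = 0 := by have := ra_le_s (A + (n:ℤ)); omega
    simp only [hG_def]
    rw [hz1, hz2, hz3]
    simp
  have hraA : ra (A-1) = 0 := by
    have h1 : b (A-1) = 0 := hbz (A-1) (by omega)
    have := ra_le_b (A-1)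
    omega
  have hGA : G (A-1) = (-1:ℝ)^(A-1) * ((s (A-1):ℝ) - (s (A-2):ℝ)) := by
    simp only [hG_def]
    rw [show A-1-1 = A-2 by ring, hraA]
    simp
  -- value of p (N₀+2)
  have hpval : p (N₀+2) = (-1:ℝ)^(A-1) * ((s (A-1):ℝ) - (s (A-2):ℝ)) := by
    simp only [hp_def]
    push_cast
    rw [show -((N₀:ℤ)+2) = A-2 by rw [hA_def]; ring, show A-2+1 = A-1 by ring]
    have eA : (-1:ℝ)^(A-1) = -((-1:ℝ)^(N₀:ℕ)) := by
      rw [hsub1, hA_def, hzn]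
    rw [eA, pow_add]
    ring
  -- conclude: p (N₀+2) = - χ
  have hchi : p (N₀+2) = -(∑ j ∈ Finset.Icc (-(N₀:ℤ)) (N₀:ℤ), (-1:ℝ)^j * (b j:ℝ)) := by
    rw [hpval]
    rw [esum, reix, hrestrict] at tel
    rw [tel, hGB, hGA]
    ring
  -- final assembly
  have main := tendsto_aux f (p (N₀+2)) K hstep
  rw [hchi] at main
  simp only [hf_def, hs_def, hb_def, neg_div] at main ⊢
  convert main using 1
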